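/- For any two probability distributions μ, ν on the nonnegative real line with finite mean, d_W(MixPo(μ), MixPo(ν)) ≤ d_W(μ, ν); that is, the map μ ↦ MixPo(μ) is a weak contraction for the Wasserstein distance d_W. -/

import Mathlib

open MeasureTheory ProbabilityTheory Finset Filter
open scoped ENNReal NNReal

noncomputable section

/-- The `k`-th harmonic number `H_k = ∑_{i=1}^k 1/i`, with `H_0 = 0`. -/
def harm (k : ℕ) : ℝ := ∑ i ∈ Finset.range k, (1 : ℝ) / (i + 1)

instance (n : ℕ) : MeasurableSpace (Equiv.Perm (Fin n)) := ⊤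

/-- The uniform distribution on the permutations of `{1,…,n}`. -/
def uniformPerm (n : ℕ) : Measure (Equiv.Perm (Fin n)) :=
  (PMF.uniformOfFintype (Equiv.Perm (Fin n))).toMeasure

/-- The (1-based) position `N = π⁻¹(l)` of the key `l` in the permutation `π`
(positions are `i+1` for `i : Fin n`, values are `π i + 1`). -/
def bstN (n l : ℕ) (π : Equiv.Perm (Fin n)) : ℕ :=
  1 + ∑ i : Fin n, if (π i : ℕ) + 1 = l then (i : ℕ) else 0

open scoped Classical in
/-- `R₋`: the number of ascending records in the subpermutation of values `< l`
appearing before the position of `l`. -/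
def bstRminus (n l : ℕ) (π : Equiv.Perm (Fin n)) : ℕ :=
  (Finset.univ.filter fun r : Fin n =>
    (r : ℕ) + 1 < bstN n l π ∧ (π r : ℕ) + 1 < l ∧
      ∀ k : Fin n, k < r → (π k : ℕ) + 1 < l → π k < π r).card

open scoped Classical in
/-- `R₊`: the number of descending records in the subpermutation of values `> l`
appearing before the position of `l`. -/
def bstRplus (n l : ℕ) (π : Equiv.Perm (Fin n)) : ℕ :=
  (Finset.univ.filter fun r : Fin n =>
    (r : ℕ) + 1 < bstN n l π ∧ (π r : ℕ) + 1 > l ∧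
      ∀ k : Fin n, k < r → (π k : ℕ) + 1 > l → π r < π k).card

/-- `X_{n,l} = R₋ + R₊`: the depth of the node containing `l` in the binary search
tree built from the permutation `π` of `{1,…,n}`. -/
def bstDepth (n l : ℕ) (π : Equiv.Perm (Fin n)) : ℕ :=
  bstRminus n l π + bstRplus n l π

open scoped Classical in
/-- `G = #{1 ≤ i < N : π(i) < l}`. -/
def bstG (n l : ℕ) (π : Equiv.Perm (Fin n)) : ℕ :=
  (Finset.univ.filter fun i : Fin n =>
    (i : ℕ) + 1 < bstN n l π ∧ (π i : ℕ) + 1 < l).card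

/-- The expectation `E X_{n,l}` of the depth of the node containing `l`. -/
def bstExp (n l : ℕ) : ℝ := ∫ π, (bstDepth n l π : ℝ) ∂(uniformPerm n)

/-- The hypergeometric probability mass function: for `X ~ HypGeo(N; M, n)`,
`P(X = k) = C(M,k)·C(N−M,n−k)/C(N,n)` for `0 ≤ k ≤ n` (and `0` otherwise). -/
def hypPMF (N M n k : ℕ) : ℝ :=
  if k ≤ n then (M.choose k * (N - M).choose (n - k) : ℝ) / (N.choose n) else 0

/-- Total variation distance between (probability) measures on `ℕ`. -/
def dTV (μ ν : Measure ℕ) : ℝ := ⨆ A : Set ℕ, |(μ A).toReal - (ν A).toReal|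

/-- The Wasserstein-type distance `d_W` of Barbour–Holst–Janson: the supremum of
`|∫ f dμ − ∫ f dν|` over measurable `f` with `|f(x) − f(y)| ≤ 1` whenever `|x − y| ≤ 1`. -/
def dW (μ ν : Measure ℝ) : ℝ :=
  sSup { d : ℝ | ∃ f : ℝ → ℝ, Measurable f ∧ (∀ x y, |x - y| ≤ 1 → |f x - f y| ≤ 1) ∧
    d = |∫ x, f x ∂μ - ∫ x, f x ∂ν| }

/-- The mixed Poisson distribution with mixing measure `ν`:
`MixPo(ν)({k}) = ∫ e^{−λ} λ^k / k! ν(dλ)`. -/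
def mixPo (ν : Measure ℝ) : Measure ℕ :=
  Measure.sum fun k =>
    (∫⁻ l, ENNReal.ofReal (Real.exp (-l) * l ^ k / k.factorial) ∂ν) • Measure.dirac k

/-- The standard normal cumulative distribution function `Φ`. -/
def stdNormalCDF (x : ℝ) : ℝ :=
  (1 / Real.sqrt (2 * Real.pi)) * ∫ y in Set.Iic x, Real.exp (-y ^ 2 / 2)

end

set_option maxHeartbeats 1000000

noncomputable section
namespace MPoAux

def pp (b : ℝ) (k : ℕ) : ℝ := Real.exp (-b) * b ^ k / k.factorial

lemma hasSum_pp (b : ℝ) : HasSum (pp b) 1 := by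
  have h := NormedSpace.expSeries_div_hasSum_exp b
  rw [← Real.exp_eq_exp_ℝ] at h
  have h2 := h.mul_left (Real.exp (-b))
  have : Real.exp (-b) * Real.exp b = 1 := by
    rw [← Real.exp_add]; simp
  rw [this] at h2
  convert h2 using 2 with k
  · rfl
  rw [pp, mul_div_assoc]

lemma pp_nonneg {b : ℝ} (hb : 0 ≤ b) (k : ℕ) : 0 ≤ pp b k := by
  unfold pp
  positivity

lemma pp_le_one {b : ℝ} (hb : 0 ≤ b) (k : ℕ) : pp b k ≤ 1 :=
  le_hasSum (hasSum_pp b) k fun j _ => pp_nonneg hb j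

lemma hasSum_mul_pp (b : ℝ) : HasSum (fun k : ℕ => (k : ℝ) * pp b k) b := by
  have h : (fun k : ℕ => ((k + 1 : ℕ) : ℝ) * pp b (k + 1)) = fun k : ℕ => b * pp b k := by
    ext k
    unfold pp
    rw [Nat.factorial_succ]
    push_cast
    field_simp
    ring
  have h2 : HasSum (fun k : ℕ => ((k + 1 : ℕ) : ℝ) * pp b (k + 1)) b := by
    rw [h]; simpa using (hasSum_pp b).mul_left b
  refine (hasSum_nat_add_iff' (f := fun k : ℕ => (k : ℝ) * pp b k) 1).mp ?_
  simpa using h2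

lemma pp_conv (a d : ℝ) (j : ℕ) :
    pp (a + d) j = ∑ k ∈ Finset.range (j + 1), pp a k * pp d (j - k) := by
  unfold pp
  rw [add_pow, neg_add, Real.exp_add, Finset.mul_sum, Finset.sum_div]
  refine Finset.sum_congr rfl fun k hk => ?_
  have hkj : k ≤ j := Nat.lt_succ_iff.mp (Finset.mem_range.mp hk)
  have hfac : (j.choose k : ℝ) * k.factorial * (j - k).factorial = j.factorial := by
    exact_mod_cast Nat.choose_mul_factorial_mul_factorial hkj
  have h1 : (k.factorial : ℝ) ≠ 0 := Nat.cast_ne_zero.mpr k.factorial_ne_zero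
  have h2 : ((j - k).factorial : ℝ) ≠ 0 := Nat.cast_ne_zero.mpr (j - k).factorial_ne_zero
  have h3 : (j.factorial : ℝ) ≠ 0 := Nat.cast_ne_zero.mpr j.factorial_ne_zero
  field_simp
  linear_combination (a ^ k * d ^ (j - k)) * hfac


section Chain
variable {f : ℝ → ℝ} (hf : ∀ x y : ℝ, |x - y| ≤ 1 → |f x - f y| ≤ 1)

include hf in
lemma chain_aux : ∀ (n : ℕ) (x y : ℝ), |x - y| ≤ n + 1 → |f x - f y| ≤ n + 1 := by
  intro n
  induction n with
  | zero => intro x y h; simpa using hf x y (by simpa using h)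
  | succ n ih =>
    intro x y h
    set z : ℝ := y + (x - y) * ((n + 1) / (n + 2)) with hz
    have hn2 : (0 : ℝ) < n + 2 := by positivity
    have hxz : |x - z| ≤ 1 := by
      have : x - z = (x - y) / (n + 2) := by rw [hz]; field_simp; ring
      rw [this, abs_div, abs_of_pos hn2, div_le_one hn2]
      calc |x - y| ≤ (n + 1) + 1 := by push_cast at h ⊢; linarith
        _ = n + 2 := by ring
    have hzy : |z - y| ≤ n + 1 := by
      have : z - y = (x - y) * ((n + 1) / (n + 2)) := by rw [hz]; ring
      rw [this, abs_mul]
      have h1 : |(n + 1 : ℝ) / (n + 2)| = (n + 1) / (n + 2) := by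
        rw [abs_of_pos]; positivity
      rw [h1]
      calc |x - y| * ((n + 1) / (n + 2)) ≤ (n + 2) * ((n + 1) / (n + 2)) := by
            apply mul_le_mul_of_nonneg_right
            · push_cast at h ⊢; linarith
            · positivity
        _ = n + 1 := by field_simp
    calc |f x - f y| ≤ |f x - f z| + |f z - f y| := abs_sub_le _ _ _
      _ ≤ 1 + (n + 1) := add_le_add (hf x z hxz) (ih z y hzy)
      _ ≤ (n + 1 : ℕ) + 1 := by push_cast; linarith
    -- done


include hf in
lemma chain_nat : ∀ (n : ℕ) (x y : ℝ), |x - y| ≤ n → |f x - f y| ≤ n := by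
  intro n
  cases n with
  | zero => intro x y h
            have : x = y := by simpa [abs_nonpos_iff, sub_eq_zero] using h
            simp [this]
  | succ n => intro x y h; exact_mod_cast chain_aux hf n x y (by exact_mod_cast h)

include hf in
lemma chain' (x y : ℝ) : |f x - f y| ≤ |x - y| + 1 := by
  set n : ℕ := ⌈|x - y|⌉₊ with hn
  have h1 : |x - y| ≤ n := Nat.le_ceil _
  have h2 : (n : ℝ) ≤ |x - y| + 1 := le_of_lt (Nat.ceil_lt_add_one (abs_nonneg _))
  exact le_trans (chain_nat hf n x y h1) h2

include hf in
lemma chain_step (k m : ℕ) : |f ((k + m : ℕ) : ℝ) - f k| ≤ m := by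
  have : |((k + m : ℕ) : ℝ) - (k : ℕ)| ≤ m := by push_cast; simp
  exact chain_nat hf m _ _ this

include hf in
lemma f_growth (k : ℕ) : |f k| ≤ |f 0| + k := by
  have := chain_step hf 0 k
  simp only [Nat.zero_add, Nat.cast_zero] at this
  calc |f k| = |f k - f 0 + f 0| := by ring_nf
    _ ≤ |f k - f 0| + |f 0| := abs_add_le _ _
    _ ≤ k + |f 0| := by linarith
    _ = |f 0| + k := by ring

end Chain

section G
variable {f : ℝ → ℝ} (hf : ∀ x y : ℝ, |x - y| ≤ 1 → |f x - f y| ≤ 1)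

include hf in
lemma summable_ppf {b : ℝ} (hb : 0 ≤ b) : Summable (fun k : ℕ => pp b k * f k) := by
  apply Summable.of_norm_bounded (g := fun k : ℕ => (|f 0| + 1) * pp b k + (k : ℝ) * pp b k)
  · exact (((hasSum_pp b).mul_left _).add (hasSum_mul_pp b)).summable
  · intro k
    rw [Real.norm_eq_abs, abs_mul, abs_of_nonneg (pp_nonneg hb k)]
    have h1 : |f k| ≤ |f 0| + k := f_growth hf k
    nlinarith [pp_nonneg hb k, pp_le_one hb k, abs_nonneg (f (k:ℝ)), Nat.cast_nonneg (α := ℝ) k]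

-- norm-summability of double products
lemma summable_prod_pp {a d : ℝ} (ha : 0 ≤ a) (hd : 0 ≤ d) {u v : ℕ → ℝ}
    (hu : Summable u) (hv : Summable v) (hu' : ∀ k, 0 ≤ u k) (hv' : ∀ k, 0 ≤ v k) :
    Summable (fun km : ℕ × ℕ => u km.1 * v km.2) :=
  hu.mul_of_nonneg hv hu' hv'

include hf in
lemma summable_F {a d : ℝ} (ha : 0 ≤ a) (hd : 0 ≤ d) :
    Summable (fun km : ℕ × ℕ => pp a km.1 * pp d km.2 * f ((km.1 + km.2 : ℕ) : ℝ)) := by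
  have hSa : Summable (pp a) := (hasSum_pp a).summable
  have hSd : Summable (pp d) := (hasSum_pp d).summable
  have hMa : Summable (fun k : ℕ => (k : ℝ) * pp a k) := (hasSum_mul_pp a).summable
  have hMd : Summable (fun k : ℕ => (k : ℝ) * pp d k) := (hasSum_mul_pp d).summable
  apply Summable.of_norm_bounded (g := fun km : ℕ × ℕ =>
    (|f 0| + 1) * (pp a km.1 * pp d km.2) + ((km.1 : ℝ) * pp a km.1) * pp d km.2
      + pp a km.1 * ((km.2 : ℝ) * pp d km.2))
  · exact (((hSa.mul_of_nonneg hSd (pp_nonneg ha) (pp_nonneg hd)).mul_left _).add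
      (hMa.mul_of_nonneg hSd (fun k => mul_nonneg (Nat.cast_nonneg k) (pp_nonneg ha k))
        (pp_nonneg hd))).add
      (hSa.mul_of_nonneg hMd (pp_nonneg ha)
        (fun k => mul_nonneg (Nat.cast_nonneg k) (pp_nonneg hd k)))
  · rintro ⟨k, m⟩
    simp only [Real.norm_eq_abs, abs_mul, abs_of_nonneg (pp_nonneg ha k),
      abs_of_nonneg (pp_nonneg hd m)]
    have h1 : |f ((k + m : ℕ) : ℝ)| ≤ |f 0| + k + m := by
      have := f_growth hf (k + m); push_cast at this ⊢; linarith
    nlinarith [pp_nonneg ha k, pp_nonneg hd m, abs_nonneg (f ((k + m : ℕ) : ℝ)),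
      mul_nonneg (pp_nonneg ha k) (pp_nonneg hd m),
      Nat.cast_nonneg (α := ℝ) k, Nat.cast_nonneg (α := ℝ) m]

include hf in
lemma tsum_diag {a d : ℝ} (ha : 0 ≤ a) (hd : 0 ≤ d) :
    ∑' km : ℕ × ℕ, pp a km.1 * pp d km.2 * f ((km.1 + km.2 : ℕ) : ℝ)
      = ∑' j : ℕ, pp (a + d) j * f j := by
  classical
  set F : ℕ × ℕ → ℝ := fun km => pp a km.1 * pp d km.2 * f ((km.1 + km.2 : ℕ) : ℝ) with hF
  have hsF : Summable F := summable_F hf ha hd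
  rw [← (Finset.HasAntidiagonal.sigmaAntidiagonalEquivProd (A := ℕ)).tsum_eq F]
  have hsig : Summable (fun x : Σ n : ℕ, (Finset.HasAntidiagonal.antidiagonal n : Finset (ℕ × ℕ)) =>
      F (Finset.HasAntidiagonal.sigmaAntidiagonalEquivProd x)) :=
    (Finset.HasAntidiagonal.sigmaAntidiagonalEquivProd (A := ℕ)).summable_iff.mpr hsF
  rw [Summable.tsum_sigma hsig]
  refine tsum_congr fun j => ?_
  calc ∑' (p : (Finset.HasAntidiagonal.antidiagonal j : Finset (ℕ × ℕ))),
        F (Finset.HasAntidiagonal.sigmaAntidiagonalEquivProd ⟨j, p⟩)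
      = ∑ p ∈ Finset.HasAntidiagonal.antidiagonal j, F p := Finset.tsum_subtype _ F
    _ = ∑ p ∈ Finset.HasAntidiagonal.antidiagonal j, pp a p.1 * pp d p.2 * f j := by
        refine Finset.sum_congr rfl fun p hp => ?_
        rw [hF]
        simp only []
        rw [Finset.HasAntidiagonal.mem_antidiagonal.mp hp]
    _ = (∑ p ∈ Finset.HasAntidiagonal.antidiagonal j, pp a p.1 * pp d p.2) * f j := by
        rw [Finset.sum_mul]
    _ = pp (a + d) j * f j := by
        rw [Finset.Nat.sum_antidiagonal_eq_sum_range_succ_mk, pp_conv]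

include hf in
lemma G_key {a d : ℝ} (ha : 0 ≤ a) (hd : 0 ≤ d) :
    |(∑' k : ℕ, pp (a + d) k * f k) - ∑' k : ℕ, pp a k * f k| ≤ d := by
  have hSa : Summable (pp a) := (hasSum_pp a).summable
  have hSd : Summable (pp d) := (hasSum_pp d).summable
  have hMd : Summable (fun k : ℕ => (k : ℝ) * pp d k) := (hasSum_mul_pp d).summable
  have hppfa : Summable (fun k : ℕ => pp a k * f k) := summable_ppf hf ha
  have hnppfa : Summable (fun k : ℕ => ‖pp a k * f k‖) := hppfa.abs
  have hnSd : Summable (fun k : ℕ => ‖pp d k‖) := hSd.abs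
  have hnSa : Summable (fun k : ℕ => ‖pp a k‖) := hSa.abs
  have hnMd : Summable (fun k : ℕ => ‖(k : ℝ) * pp d k‖) := hMd.abs
  -- G a as a double sum
  have hGa : (∑' k : ℕ, pp a k * f k)
      = ∑' km : ℕ × ℕ, pp a km.1 * f km.1 * pp d km.2 := by
    have := tsum_mul_tsum_of_summable_norm hnppfa hnSd
    rw [(hasSum_pp d).tsum_eq, mul_one] at this
    exact this
  have hprod : Summable (fun km : ℕ × ℕ => pp a km.1 * f km.1 * pp d km.2) :=
    summable_mul_of_summable_norm hnppfa hnSd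
  have hF : Summable (fun km : ℕ × ℕ => pp a km.1 * pp d km.2 * f ((km.1 + km.2 : ℕ) : ℝ)) :=
    summable_F hf ha hd
  have hGad : (∑' k : ℕ, pp (a + d) k * f k)
      = ∑' km : ℕ × ℕ, pp a km.1 * pp d km.2 * f ((km.1 + km.2 : ℕ) : ℝ) :=
    (tsum_diag hf ha hd).symm
  rw [hGa, hGad, ← Summable.tsum_sub hF hprod]
  -- bound by the double sum of pp a k * pp d m * m
  have hDiff : Summable (fun km : ℕ × ℕ =>
      pp a km.1 * pp d km.2 * f ((km.1 + km.2 : ℕ) : ℝ) - pp a km.1 * f km.1 * pp d km.2) :=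
    hF.sub hprod
  have hBound : Summable (fun km : ℕ × ℕ => pp a km.1 * ((km.2 : ℝ) * pp d km.2)) :=
    summable_mul_of_summable_norm hnSa hnMd
  have hDiffn : Summable (fun km : ℕ × ℕ =>
      ‖pp a km.1 * pp d km.2 * f ((km.1 + km.2 : ℕ) : ℝ) - pp a km.1 * f km.1 * pp d km.2‖) := by
    simpa [Real.norm_eq_abs] using hDiff.abs
  calc |∑' km : ℕ × ℕ, (pp a km.1 * pp d km.2 * f ((km.1 + km.2 : ℕ) : ℝ)
          - pp a km.1 * f km.1 * pp d km.2)|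
      ≤ ∑' km : ℕ × ℕ, ‖pp a km.1 * pp d km.2 * f ((km.1 + km.2 : ℕ) : ℝ)
          - pp a km.1 * f km.1 * pp d km.2‖ := norm_tsum_le_tsum_norm hDiffn
    _ ≤ ∑' km : ℕ × ℕ, pp a km.1 * ((km.2 : ℝ) * pp d km.2) := by
        refine Summable.tsum_le_tsum (fun km => ?_) hDiffn hBound
        obtain ⟨k, m⟩ := km
        have heq : pp a k * pp d m * f ((k + m : ℕ) : ℝ) - pp a k * f k * pp d m
            = pp a k * pp d m * (f ((k + m : ℕ) : ℝ) - f k) := by ring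
        rw [heq, Real.norm_eq_abs, abs_mul, abs_mul,
          abs_of_nonneg (pp_nonneg ha k), abs_of_nonneg (pp_nonneg hd m)]
        have h1 : |f ((k + m : ℕ) : ℝ) - f k| ≤ m := chain_step hf k m
        have := mul_nonneg (pp_nonneg ha k) (pp_nonneg hd m)
        nlinarith [pp_nonneg ha k, pp_nonneg hd m, abs_nonneg (f ((k + m : ℕ) : ℝ) - f k)]
    _ = d := by
        have := tsum_mul_tsum_of_summable_norm hnSa hnMd
        rw [(hasSum_pp a).tsum_eq, (hasSum_mul_pp d).tsum_eq, one_mul] at this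
        exact this.symm

include hf in
lemma G_lip : ∀ x y : ℝ, |x - y| ≤ 1 →
    |(∑' k : ℕ, pp (max x 0) k * f k) - ∑' k : ℕ, pp (max y 0) k * f k| ≤ 1 := by
  have key : ∀ u v : ℝ, 0 ≤ u → 0 ≤ v → u ≤ v → v - u ≤ 1 →
      |(∑' k : ℕ, pp v k * f k) - ∑' k : ℕ, pp u k * f k| ≤ 1 := by
    intro u v hu hv huv h1
    have := G_key hf hu (sub_nonneg.mpr huv)
    rw [add_sub_cancel] at this
    linarith
  intro x y hxy
  have hmax : |max x 0 - max y 0| ≤ 1 :=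
    le_trans (abs_max_sub_max_le_abs _ _ _) hxy
  rcases le_total (max y 0) (max x 0) with h | h
  · exact key _ _ (le_max_right y 0) (le_max_left _ 0 |>.trans h |>.trans (le_refl _) |> fun _ => le_trans (le_max_right x 0) (le_refl _)) h (by rw [abs_sub_le_iff] at hmax; linarith)
  · rw [abs_sub_comm]
    exact key _ _ (le_max_right x 0) (le_max_right y 0) h (by rw [abs_sub_le_iff] at hmax; linarith)

end G

lemma measurable_pp_max (k : ℕ) : Measurable fun l : ℝ => pp (max l 0) k := by
  unfold pp
  fun_prop

section Gmeas
variable {f : ℝ → ℝ} (hf : ∀ x y : ℝ, |x - y| ≤ 1 → |f x - f y| ≤ 1)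
  (hfm : Measurable f)

include hf hfm in
lemma measurable_g : Measurable fun l : ℝ => ∑' k : ℕ, pp (max l 0) k * f k := by
  apply measurable_of_tendsto_metrizable
    (f := fun n : ℕ => fun l : ℝ => ∑ k ∈ Finset.range n, pp (max l 0) k * f k)
  · intro n
    exact Finset.measurable_sum _ fun k _ => (measurable_pp_max k).mul measurable_const
  · rw [tendsto_pi_nhds]
    intro l
    exact (summable_ppf hf (le_max_right l 0)).hasSum.tendsto_sum_nat
end Gmeas

section IntId
variable {μ : Measure ℝ} [IsProbabilityMeasure μ] (hμ0 : μ {x | x < 0} = 0)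
  (hμint : Integrable id μ)
variable {f : ℝ → ℝ} (hf : ∀ x y : ℝ, |x - y| ≤ 1 → |f x - f y| ≤ 1) (hfm : Measurable f)

include hμ0 in
lemma ae_nonneg : ∀ᵐ l ∂μ, 0 ≤ l := by
  rw [ae_iff]
  convert hμ0 using 2
  ext x; simp [not_le]

/-- `c' k` -/
noncomputable def cc (μ : Measure ℝ) (k : ℕ) : ℝ≥0∞ :=
  ∫⁻ l, ENNReal.ofReal (pp (max l 0) k) ∂μ

include hμ0 in
lemma mixPo_eq : mixPo μ = Measure.sum fun k => cc μ k • Measure.dirac k := by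
  unfold mixPo cc
  refine congrArg Measure.sum (funext fun k => ?_)
  congr 1
  apply lintegral_congr_ae
  filter_upwards [ae_nonneg hμ0] with l hl
  rw [max_eq_left hl]
  rfl

lemma cc_le_one (k : ℕ) : cc μ k ≤ 1 := by
  unfold cc
  calc ∫⁻ l, ENNReal.ofReal (pp (max l 0) k) ∂μ ≤ ∫⁻ _, 1 ∂μ := by
        apply lintegral_mono fun l => ?_
        exact ENNReal.ofReal_le_of_le_toReal (by simpa using pp_le_one (le_max_right l 0) k)
    _ = 1 := by simp

lemma tsum_cc : ∑' k, cc μ k = 1 := by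
  unfold cc
  rw [← lintegral_tsum fun k => ((measurable_pp_max k).ennreal_ofReal).aemeasurable]
  have : ∀ l : ℝ, ∑' k, ENNReal.ofReal (pp (max l 0) k) = 1 := by
    intro l
    have hs := (hasSum_pp (max l 0))
    rw [← ENNReal.ofReal_tsum_of_nonneg (pp_nonneg (le_max_right l 0)) hs.summable,
      hs.tsum_eq, ENNReal.ofReal_one]
  simp_rw [this]
  simp

include hμint in
lemma tsum_k_cc : ∑' k : ℕ, (k : ℝ≥0∞) * cc μ k = ∫⁻ l, ENNReal.ofReal (max l 0) ∂μ := by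
  unfold cc
  have h1 : ∀ k : ℕ, (k : ℝ≥0∞) * ∫⁻ l, ENNReal.ofReal (pp (max l 0) k) ∂μ
      = ∫⁻ l, ENNReal.ofReal ((k : ℝ) * pp (max l 0) k) ∂μ := by
    intro k
    rw [← lintegral_const_mul _ ((measurable_pp_max k).ennreal_ofReal)]
    congr 1; ext l
    rw [ENNReal.ofReal_mul (by positivity), ENNReal.ofReal_natCast]
  simp_rw [h1]
  rw [← lintegral_tsum fun k => (((measurable_pp_max k).const_mul _).ennreal_ofReal).aemeasurable]
  congr 1; ext l
  have hs := hasSum_mul_pp (max l 0)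
  rw [← ENNReal.ofReal_tsum_of_nonneg
    (fun k => mul_nonneg (Nat.cast_nonneg k) (pp_nonneg (le_max_right l 0) k)) hs.summable,
    hs.tsum_eq]

include hμint in
lemma lint_max_lt_top : ∫⁻ l, ENNReal.ofReal (max l 0) ∂μ < ⊤ := by
  have h := hμint.hasFiniteIntegral
  unfold HasFiniteIntegral at h
  calc ∫⁻ l, ENNReal.ofReal (max l 0) ∂μ ≤ ∫⁻ l, ‖id l‖₊ ∂μ := by
        apply lintegral_mono fun l => ?_
        simp only [id]
        rw [← enorm_eq_nnnorm, ← ofReal_norm]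
        exact ENNReal.ofReal_le_ofReal (by simp [abs_nonneg, le_abs_self, max_le_iff, Real.norm_eq_abs, neg_le_abs, abs_nonneg])
    _ < ⊤ := h

include hμint in
lemma tsum_bound_cc : ∑' k : ℕ, (ENNReal.ofReal |f 0| + k) * cc μ k < ⊤ := by
  have h : ∀ k : ℕ, (ENNReal.ofReal |f 0| + k) * cc μ k
      = ENNReal.ofReal |f 0| * cc μ k + (k : ℝ≥0∞) * cc μ k := fun k => by ring
  simp_rw [h]
  rw [ENNReal.tsum_add, ENNReal.tsum_mul_left, tsum_cc, tsum_k_cc hμint, mul_one]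
  exact ENNReal.add_lt_top.mpr ⟨ENNReal.ofReal_lt_top, lint_max_lt_top hμint⟩

include hf in
lemma nnnorm_f_le (k : ℕ) : (‖f k‖₊ : ℝ≥0∞) ≤ ENNReal.ofReal |f 0| + k := by
  rw [← enorm_eq_nnnorm, ← ofReal_norm, Real.norm_eq_abs]
  calc ENNReal.ofReal |f (k : ℝ)| ≤ ENNReal.ofReal (|f 0| + k) :=
        ENNReal.ofReal_le_ofReal (f_growth hf k)
    _ = ENNReal.ofReal |f 0| + ENNReal.ofReal k := ENNReal.ofReal_add (abs_nonneg _) (by positivity)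
    _ = ENNReal.ofReal |f 0| + k := by rw [ENNReal.ofReal_natCast]

include hμ0 hμint hf hfm in
lemma integral_mixPo :
    ∫ x, f x ∂(Measure.map (Nat.cast : ℕ → ℝ) (mixPo μ))
      = ∫ l, (∑' k : ℕ, pp (max l 0) k * f k) ∂μ := by
  have hcast : Measurable (Nat.cast : ℕ → ℝ) := measurable_from_top
  rw [integral_map hcast.aemeasurable hfm.aestronglyMeasurable,
    mixPo_eq hμ0]
  set F : ℕ → ℝ := fun k => f k with hF
  have hFm : Measurable F := measurable_from_top
  -- integrability over the sum measure
  have hInt : Integrable F (Measure.sum fun k => cc μ k • Measure.dirac k) := by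
    refine ⟨hFm.aestronglyMeasurable, ?_⟩
    unfold HasFiniteIntegral
    rw [lintegral_sum_measure]
    have hval : ∀ k : ℕ, ∫⁻ a, (‖F a‖₊ : ℝ≥0∞) ∂(cc μ k • Measure.dirac k)
        = cc μ k * ‖F k‖₊ := by
      intro k
      rw [lintegral_smul_measure, lintegral_dirac' _ (by fun_prop), smul_eq_mul]
    simp_rw [enorm_eq_nnnorm, hval]
    refine lt_of_le_of_lt (ENNReal.tsum_le_tsum fun k => ?_) (tsum_bound_cc hμint (f := f))
    rw [mul_comm]
    exact mul_le_mul_of_nonneg_right (nnnorm_f_le hf k) (zero_le)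
  rw [integral_sum_measure hInt]
  have hstep : ∀ k : ℕ, ∫ a, F a ∂(cc μ k • Measure.dirac k) = (cc μ k).toReal * f k := by
    intro k
    rw [integral_smul_measure, integral_dirac' _ _ hFm.stronglyMeasurable]
    simp [hF, smul_eq_mul]
  simp_rw [hstep]
  have hccR : ∀ k : ℕ, (cc μ k).toReal = ∫ l, pp (max l 0) k ∂μ := by
    intro k
    rw [integral_eq_lintegral_of_nonneg_ae
      (Filter.Eventually.of_forall fun l => pp_nonneg (le_max_right l 0) k)
      (measurable_pp_max k).aestronglyMeasurable]
    rfl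
  have hmulc : ∀ k : ℕ, (cc μ k).toReal * f k = ∫ l, pp (max l 0) k * f k ∂μ := by
    intro k
    rw [hccR k, ← integral_mul_const]
  simp_rw [hmulc]
  rw [← integral_tsum (fun k => ((measurable_pp_max k).mul_const _).aestronglyMeasurable) ?_]
  refine ne_of_lt (lt_of_le_of_lt (ENNReal.tsum_le_tsum fun k => ?_) (tsum_bound_cc hμint (f := f)))
  have hl : ∀ l : ℝ, (‖pp (max l 0) k * f k‖₊ : ℝ≥0∞)
      = ENNReal.ofReal (pp (max l 0) k) * (‖f k‖₊ : ℝ≥0∞) := by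
    intro l
    rw [← enorm_eq_nnnorm, ← enorm_eq_nnnorm, ← ofReal_norm, ← ofReal_norm, Real.norm_eq_abs,
      Real.norm_eq_abs, abs_mul, abs_of_nonneg (pp_nonneg (le_max_right l 0) k),
      ENNReal.ofReal_mul (pp_nonneg (le_max_right l 0) k)]
  simp_rw [enorm_eq_nnnorm, hl]
  rw [lintegral_mul_const _ ((measurable_pp_max k).ennreal_ofReal)]
  rw [mul_comm]
  exact mul_le_mul_of_nonneg_right (nnnorm_f_le hf k) (zero_le)

end IntId

section Final
variable {μ ν : Measure ℝ} [IsProbabilityMeasure μ] [IsProbabilityMeasure ν]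
  (hμint : Integrable id μ) (hνint : Integrable id ν)

include hμint in
lemma f_int {f : ℝ → ℝ} (hf : ∀ x y : ℝ, |x - y| ≤ 1 → |f x - f y| ≤ 1)
    (hfm : Measurable f) : Integrable f μ := by
  refine Integrable.mono' ((integrable_const (|f 0| + 1)).add hμint.norm)
    hfm.aestronglyMeasurable (Filter.Eventually.of_forall fun x => ?_)
  have h := chain' hf x 0
  simp only [sub_zero] at h
  have h2 : |f x| ≤ |f x - f 0| + |f 0| := by
    calc |f x| = |f x - f 0 + f 0| := by ring_nf
      _ ≤ |f x - f 0| + |f 0| := abs_add_le _ _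
  simp only [Pi.add_apply, Real.norm_eq_abs, id]
  linarith

include hμint in
lemma int_sub_bound {f : ℝ → ℝ} (hf : ∀ x y : ℝ, |x - y| ≤ 1 → |f x - f y| ≤ 1)
    (hfm : Measurable f) : |(∫ x, f x ∂μ) - f 0| ≤ (∫ x, |x| ∂μ) + 1 := by
  have hint : Integrable f μ := f_int hμint hf hfm
  have habs : Integrable (fun x : ℝ => |x|) μ := by
    simpa [Real.norm_eq_abs] using hμint.norm
  have h0 : (∫ x, f x ∂μ) - f 0 = ∫ x, (f x - f 0) ∂μ := by
    rw [integral_sub hint (integrable_const (f 0)), integral_const]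
    simp
  rw [h0]
  calc |∫ x, (f x - f 0) ∂μ| = ‖∫ x, (f x - f 0) ∂μ‖ := (Real.norm_eq_abs _).symm
    _ ≤ ∫ x, |f x - f 0| ∂μ := by
        simpa [Real.norm_eq_abs] using norm_integral_le_integral_norm (fun x => f x - f 0) (μ := μ)
    _ ≤ ∫ x, (|x| + 1) ∂μ := by
        refine integral_mono (hint.sub (integrable_const _)).abs
          (habs.add (integrable_const 1)) fun x => ?_
        simpa using chain' hf x 0
    _ = (∫ x, |x| ∂μ) + 1 := by
        rw [integral_add habs (integrable_const 1), integral_const]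
        simp

include hμint hνint in
lemma dW_bddAbove : BddAbove { d : ℝ | ∃ f : ℝ → ℝ, Measurable f ∧
    (∀ x y, |x - y| ≤ 1 → |f x - f y| ≤ 1) ∧ d = |∫ x, f x ∂μ - ∫ x, f x ∂ν| } := by
  refine ⟨(∫ x, |x| ∂μ) + (∫ x, |x| ∂ν) + 2, ?_⟩
  rintro d ⟨f, hfm, hf, rfl⟩
  have h1 := int_sub_bound hμint hf hfm
  have h2 := int_sub_bound hνint hf hfm
  calc |∫ x, f x ∂μ - ∫ x, f x ∂ν|
      ≤ |(∫ x, f x ∂μ) - f 0| + |(∫ x, f x ∂ν) - f 0| := by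
        rw [show (∫ x, f x ∂μ) - ∫ x, f x ∂ν
          = ((∫ x, f x ∂μ) - f 0) - ((∫ x, f x ∂ν) - f 0) by ring]
        exact abs_sub _ _
    _ ≤ (∫ x, |x| ∂μ) + (∫ x, |x| ∂ν) + 2 := by linarith

include hμint hνint in
lemma dW_nonneg : 0 ≤ dW μ ν := by
  apply le_csSup (dW_bddAbove hμint hνint)
  exact ⟨fun _ => 0, measurable_const, fun x y _ => by simp, by simp⟩

end Final

end MPoAux
end

theorem mixPo_dW_contraction (μ ν : Measure ℝ)
    [IsProbabilityMeasure μ] [IsProbabilityMeasure ν]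
    (hμ : μ {x | x < 0} = 0) (hν : ν {x | x < 0} = 0)
    (hμint : Integrable id μ) (hνint : Integrable id ν) :
    dW (Measure.map (Nat.cast : ℕ → ℝ) (mixPo μ))
        (Measure.map (Nat.cast : ℕ → ℝ) (mixPo ν)) ≤ dW μ ν := by
  apply Real.sSup_le
  · rintro d ⟨f, hfm, hf, rfl⟩
    rw [MPoAux.integral_mixPo hμ hμint hf hfm, MPoAux.integral_mixPo hν hνint hf hfm]
    apply le_csSup (MPoAux.dW_bddAbove hμint hνint)
    exact ⟨fun l => ∑' k : ℕ, MPoAux.pp (max l 0) k * f k, MPoAux.measurable_g hf hfm, MPoAux.G_lip hf, rfl⟩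
  · exact MPoAux.dW_nonneg hμint hνint
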